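/- Fix integers m ≥ 1 and M ≥ 2, define P₆ : ((Fin (m+1) × Fin M) → ℝ) → ℝ by P₆(p) = Σ_{b ∈ ℤ, M ∣ b} [f_p³ · f̄_p³]_{(0,b)}, let p* : Fin (m+1) → ℝ, and let S = { q : (Fin (m+1) × Fin M) → ℝ | for every i, Σ_{j=0}^{M−1} q(i,j) = p*(i) } be the affine constraint set. If p ∈ S is a local minimum of P₆ on S, then there exists c : Fin (m+1) → ℝ such that for all i ∈ {0,…,m} and j ∈ {0,…,M−1}, Σ_{b ∈ ℤ, M ∣ b} [f_p³ · f̄_p²]_{(i, b+j)} = c(i), where j is cast to ℤ. (Lemma 1: necessary first-order conditions for a local minimizer of the expected cycle-6 count.) -/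

import Mathlib

/-- `f_{p,a}`: the Laurent polynomial `Σ_{i,j} p(i,j) X^{a·i} Y^{a·j}` in
`AddMonoidAlgebra ℝ (ℤ × ℤ)`; `fpa p 1 = f_p` and `fpa p (-1) = f̄_p`. -/
noncomputable def fpa {m M : ℕ} (p : Fin (m + 1) × Fin M → ℝ) (a : ℤ) :
    AddMonoidAlgebra ℝ (ℤ × ℤ) :=
  ∑ ij : Fin (m + 1) × Fin M,
    AddMonoidAlgebra.single (a * (ij.1 : ℤ), a * (ij.2 : ℤ)) (p ij)

/-- `P₆(p) = Σ_{b ∈ ℤ, M ∣ b} [f_p³ · f̄_p³]_{(0,b)}`. -/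
noncomputable def P6 (m M : ℕ) (p : Fin (m + 1) × Fin M → ℝ) : ℝ :=
  ∑ᶠ (b : ℤ) (_ : (M : ℤ) ∣ b), ((fpa p 1) ^ 3 * (fpa p (-1)) ^ 3).coeff (0, b)


noncomputable def Phi (M : ℕ) (g : AddMonoidAlgebra ℝ (ℤ × ℤ)) : ℝ :=
  ∑ᶠ (b : ℤ) (_ : (M : ℤ) ∣ b), g.coeff (0, b)

lemma Phi_eq_finsum (M : ℕ) (g : AddMonoidAlgebra ℝ (ℤ × ℤ)) :
    Phi M g = ∑ᶠ b : ℤ, (if (M : ℤ) ∣ b then g.coeff (0, b) else 0) :=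
  finsum_congr fun _ => finsum_eq_if

lemma Phi_eq_sum (M : ℕ) (g : AddMonoidAlgebra ℝ (ℤ × ℤ)) (T : Finset ℤ)
    (hT : ∀ x ∈ g.coeff.support, x.2 ∈ T) :
    Phi M g = ∑ b ∈ T, if (M : ℤ) ∣ b then g.coeff (0, b) else 0 := by
  rw [Phi_eq_finsum]
  apply finsum_eq_sum_of_support_subset
  intro b hb
  have hgb : g.coeff (0, b) ≠ 0 := by
    by_contra h
    simp only [Function.mem_support] at hb
    rw [h] at hb
    simp at hb
  exact hT (0, b) (Finsupp.mem_support_iff.2 hgb)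

lemma Phi_add (M : ℕ) (g h : AddMonoidAlgebra ℝ (ℤ × ℤ)) :
    Phi M (g + h) = Phi M g + Phi M h := by
  classical
  set T := (g.coeff.support ∪ h.coeff.support).image Prod.snd with hT
  have h1 : ∀ x ∈ g.coeff.support, x.2 ∈ T := fun x hx =>
    Finset.mem_image_of_mem _ (Finset.mem_union_left _ hx)
  have h2 : ∀ x ∈ h.coeff.support, x.2 ∈ T := fun x hx =>
    Finset.mem_image_of_mem _ (Finset.mem_union_right _ hx)
  have h3 : ∀ x ∈ (g + h).coeff.support, x.2 ∈ T := fun x hx =>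
    Finset.mem_image_of_mem _ (Finsupp.support_add hx)
  rw [Phi_eq_sum M g T h1, Phi_eq_sum M h T h2, Phi_eq_sum M (g + h) T h3,
    ← Finset.sum_add_distrib]
  refine Finset.sum_congr rfl fun b _ => ?_
  by_cases hd : (M : ℤ) ∣ b <;> simp only [hd, if_true, if_false]
  · rfl
  · simp

lemma Phi_sub (M : ℕ) (g h : AddMonoidAlgebra ℝ (ℤ × ℤ)) :
    Phi M (g - h) = Phi M g - Phi M h := by
  classical
  set T := (g.coeff.support ∪ h.coeff.support).image Prod.snd with hT
  have h1 : ∀ x ∈ g.coeff.support, x.2 ∈ T := fun x hx =>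
    Finset.mem_image_of_mem _ (Finset.mem_union_left _ hx)
  have h2 : ∀ x ∈ h.coeff.support, x.2 ∈ T := fun x hx =>
    Finset.mem_image_of_mem _ (Finset.mem_union_right _ hx)
  have h3 : ∀ x ∈ (g - h).coeff.support, x.2 ∈ T := fun x hx =>
    Finset.mem_image_of_mem _ (Finsupp.support_sub hx)
  rw [Phi_eq_sum M g T h1, Phi_eq_sum M h T h2, Phi_eq_sum M (g - h) T h3,
    ← Finset.sum_sub_distrib]
  refine Finset.sum_congr rfl fun b _ => ?_
  by_cases hd : (M : ℤ) ∣ b <;> simp only [hd, if_true, if_false]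
  · rfl
  · simp

lemma Phi_smul (M : ℕ) (t : ℝ) (g : AddMonoidAlgebra ℝ (ℤ × ℤ)) :
    Phi M (t • g) = t * Phi M g := by
  classical
  set T := g.coeff.support.image Prod.snd with hT
  have h1 : ∀ x ∈ g.coeff.support, x.2 ∈ T := fun x hx => Finset.mem_image_of_mem _ hx
  have h2 : ∀ x ∈ (t • g).coeff.support, x.2 ∈ T := fun x hx =>
    Finset.mem_image_of_mem _ (Finsupp.support_smul hx)
  rw [Phi_eq_sum M g T h1, Phi_eq_sum M _ T h2, Finset.mul_sum]
  refine Finset.sum_congr rfl fun b _ => ?_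
  by_cases hd : (M : ℤ) ∣ b <;> simp only [hd, if_true, if_false]
  · rfl
  · simp

noncomputable def sigmaNeg : AddMonoidAlgebra ℝ (ℤ × ℤ) ≃ₐ[ℝ] AddMonoidAlgebra ℝ (ℤ × ℤ) :=
  AddMonoidAlgebra.domCongr ℝ ℝ (AddEquiv.neg (ℤ × ℤ))

lemma sigmaNeg_apply (g : AddMonoidAlgebra ℝ (ℤ × ℤ)) (x : ℤ × ℤ) :
    (sigmaNeg g).coeff x = g.coeff (-x) := by
  simp [sigmaNeg]

lemma Phi_sigmaNeg (M : ℕ) (g : AddMonoidAlgebra ℝ (ℤ × ℤ)) :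
    Phi M (sigmaNeg g) = Phi M g := by
  classical
  set T := g.coeff.support.image Prod.snd ∪ g.coeff.support.image (fun x => -x.2) with hT
  have h1 : ∀ x ∈ g.coeff.support, x.2 ∈ T := fun x hx =>
    Finset.mem_union_left _ (Finset.mem_image_of_mem _ hx)
  have h2 : ∀ x ∈ (sigmaNeg g).coeff.support, x.2 ∈ T := by
    intro x hx
    have : g.coeff (-x) ≠ 0 := by
      rw [← sigmaNeg_apply]; exact Finsupp.mem_support_iff.1 hx
    have hmem : -x ∈ g.coeff.support := Finsupp.mem_support_iff.2 this
    apply Finset.mem_union_right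
    have : x.2 = -((-x).2) := by simp
    rw [this]
    exact Finset.mem_image_of_mem _ hmem
  have hsym : ∀ b : ℤ, b ∈ T ↔ -b ∈ T := by
    intro b
    simp only [hT, Finset.mem_union, Finset.mem_image]
    constructor
    · rintro (⟨x, hx, rfl⟩ | ⟨x, hx, rfl⟩)
      · exact Or.inr ⟨x, hx, rfl⟩
      · exact Or.inl ⟨x, hx, by simp⟩
    · rintro (⟨x, hx, hb⟩ | ⟨x, hx, hb⟩)
      · exact Or.inr ⟨x, hx, by omega⟩
      · exact Or.inl ⟨x, hx, by omega⟩
  rw [Phi_eq_sum M _ T h2, Phi_eq_sum M g T h1]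
  refine Finset.sum_equiv (Equiv.neg ℤ) (by simpa using fun b => hsym b) ?_
  intro b hb
  have : (sigmaNeg g).coeff (0, b) = g.coeff (0, -b) := by rw [sigmaNeg_apply]; norm_num
  rw [this]
  simp only [Equiv.neg_apply]
  by_cases hd : (M : ℤ) ∣ b
  · rw [if_pos hd, if_pos ((dvd_neg).2 hd)]
  · rw [if_neg hd, if_neg (fun h => hd (by simpa using (dvd_neg).1 h))]

lemma fpa_line {m M : ℕ} (p v : Fin (m + 1) × Fin M → ℝ) (t : ℝ) (a : ℤ) :
    fpa (fun x => p x + t * v x) a = fpa p a + t • fpa v a := by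
  unfold fpa
  rw [Finset.smul_sum, ← Finset.sum_add_distrib]
  refine Finset.sum_congr rfl fun ij _ => ?_
  rw [AddMonoidAlgebra.smul_single, ← AddMonoidAlgebra.single_add, smul_eq_mul]

lemma fpa_sub {m M : ℕ} (p v : Fin (m + 1) × Fin M → ℝ) (a : ℤ) :
    fpa (fun x => p x - v x) a = fpa p a - fpa v a := by
  unfold fpa
  rw [← Finset.sum_sub_distrib]
  refine Finset.sum_congr rfl fun ij _ => ?_
  rw [← AddMonoidAlgebra.single_sub]

lemma fpa_delta {m M : ℕ} (x0 : Fin (m + 1) × Fin M) (a : ℤ) :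
    fpa (fun x => if x = x0 then (1 : ℝ) else 0) a
      = AddMonoidAlgebra.single (a * (x0.1 : ℤ), a * (x0.2 : ℤ)) 1 := by
  classical
  unfold fpa
  rw [Finset.sum_eq_single x0]
  · simp
  · intro b _ hb
    simp [hb]
  · intro h
    exact absurd (Finset.mem_univ x0) h

lemma sigmaNeg_fpa {m M : ℕ} (p : Fin (m + 1) × Fin M → ℝ) (a : ℤ) :
    sigmaNeg (fpa p a) = fpa p (-a) := by
  unfold fpa
  rw [map_sum]
  refine Finset.sum_congr rfl fun ij _ => ?_
  rw [show (sigmaNeg : AddMonoidAlgebra ℝ (ℤ × ℤ) ≃ₐ[ℝ] _) = AddMonoidAlgebra.domCongr ℝ ℝ (AddEquiv.neg (ℤ × ℤ)) from rfl]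
  rw [AddMonoidAlgebra.domCongr_single]
  congr 1
  simp [neg_mul]


theorem stmt10 {m M : ℕ} (hm : 1 ≤ m) (hM : 2 ≤ M)
    (pstar : Fin (m + 1) → ℝ)
    (S : Set ((Fin (m + 1) × Fin M) → ℝ))
    (hS : S = {q | ∀ i : Fin (m + 1), ∑ j : Fin M, q (i, j) = pstar i})
    (p : Fin (m + 1) × Fin M → ℝ) (hpS : p ∈ S)
    (hmin : IsLocalMinOn (P6 m M) S p) :
    ∃ c : Fin (m + 1) → ℝ, ∀ (i : Fin (m + 1)) (j : Fin M),
      (∑ᶠ (b : ℤ) (_ : (M : ℤ) ∣ b),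
        ((fpa p 1) ^ 3 * (fpa p (-1)) ^ 2).coeff ((i : ℤ), b + (j : ℤ))) = c i := by
  classical
  subst hS
  set f := fpa p 1 with hf
  set fb := fpa p (-1) with hfb
  refine ⟨fun i => ∑ᶠ (b : ℤ) (_ : (M : ℤ) ∣ b), (f ^ 3 * fb ^ 2).coeff ((i : ℤ), b), ?_⟩
  intro i j
  have hM0 : 0 < M := by omega
  set j0 : Fin M := ⟨0, hM0⟩ with hj0
  set v : Fin (m + 1) × Fin M → ℝ :=
    fun x => (if x = (i, j) then (1 : ℝ) else 0) - (if x = (i, j0) then (1 : ℝ) else 0) with hv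
  set g := fpa v 1 with hg
  set gb := fpa v (-1) with hgb
  have hg1 : g = AddMonoidAlgebra.single ((i : ℤ), (j : ℤ)) 1
      - AddMonoidAlgebra.single ((i : ℤ), 0) 1 := by
    rw [hg, hv, fpa_sub, fpa_delta, fpa_delta]
    norm_num [hj0]
  have hgm : gb = AddMonoidAlgebra.single (-(i : ℤ), -(j : ℤ)) 1
      - AddMonoidAlgebra.single (-(i : ℤ), 0) 1 := by
    rw [hgb, hv, fpa_sub, fpa_delta, fpa_delta]
    norm_num [hj0]
  set γ : ℝ → (Fin (m + 1) × Fin M → ℝ) := fun t x => p x + t * v x with hγ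
  have hγ0 : γ 0 = p := by funext x; simp [hγ]
  have hvsum : ∀ i' : Fin (m + 1), ∑ j' : Fin M, v (i', j') = 0 := by
    intro i'
    simp only [hv]
    rw [Finset.sum_sub_distrib]
    have e1 : ∀ jj : Fin M, (∑ j' : Fin M, (if ((i', j') : Fin (m+1) × Fin M) = (i, jj) then (1 : ℝ) else 0))
        = if i' = i then 1 else 0 := by
      intro jj
      simp [Prod.ext_iff, ite_and]
    rw [e1 j, e1 j0, sub_self]
  have hγS : ∀ t, γ t ∈ {q : Fin (m + 1) × Fin M → ℝ |
      ∀ i' : Fin (m + 1), ∑ j' : Fin M, q (i', j') = pstar i'} := by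
    intro t i'
    simp only [hγ]
    rw [Finset.sum_add_distrib, ← Finset.mul_sum, hvsum, mul_zero, add_zero]
    exact hpS i'
  have hloc : IsLocalMin (fun t => P6 m M (γ t)) 0 := by
    have hcont : Continuous γ :=
      continuous_pi fun x => continuous_const.add (continuous_id.mul continuous_const)
    have ht : Filter.Tendsto γ (nhds 0)
        (nhdsWithin p {q : Fin (m + 1) × Fin M → ℝ |
          ∀ i' : Fin (m + 1), ∑ j' : Fin M, q (i', j') = pstar i'}) := by
      apply tendsto_nhdsWithin_of_tendsto_nhds_of_eventually_within
      · have h0 := hcont.tendsto 0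
        rwa [hγ0] at h0
      · exact Filter.Eventually.of_forall hγS
    have h' : IsMinFilter (P6 m M) (nhdsWithin p {q : Fin (m + 1) × Fin M → ℝ |
        ∀ i' : Fin (m + 1), ∑ j' : Fin M, q (i', j') = pstar i'}) (γ 0) := by
      rw [hγ0]; exact hmin
    exact h'.comp_tendsto ht
  have h3smul : ∀ x : AddMonoidAlgebra ℝ (ℤ × ℤ), Phi M (3 * x) = 3 * Phi M x := by
    intro x
    have : (3 : AddMonoidAlgebra ℝ (ℤ × ℤ)) * x = (3 : ℝ) • x := by
      rw [Algebra.smul_def, map_ofNat]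
    rw [this, Phi_smul]
  have halg : ∀ (t : ℝ) (k : ℕ) (x : AddMonoidAlgebra ℝ (ℤ × ℤ)),
      Phi M ((algebraMap ℝ (AddMonoidAlgebra ℝ (ℤ × ℤ)) t) ^ k * x) = t ^ k * Phi M x := by
    intro t k x
    rw [← map_pow, ← Algebra.smul_def, Phi_smul]
  have hexp : ∀ t : ℝ, P6 m M (γ t) =
      Phi M (f^3*fb^3)
      + t * Phi M (3*(f^2*g*fb^3) + 3*(f^3*fb^2*gb))
      + t^2 * Phi M (3*(f^3*fb*gb^2) + 9*(f^2*g*fb^2*gb) + 3*(f*g^2*fb^3))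
      + t^3 * Phi M (f^3*gb^3 + 9*(f^2*g*fb*gb^2) + 9*(f*g^2*fb^2*gb) + g^3*fb^3)
      + t^4 * Phi M (3*(f^2*g*gb^3) + 9*(f*g^2*fb*gb^2) + 3*(g^3*fb^2*gb))
      + t^5 * Phi M (3*(f*g^2*gb^3) + 3*(g^3*fb*gb^2))
      + t^6 * Phi M (g^3*gb^3) := by
    intro t
    have h1 : P6 m M (γ t) = Phi M ((f + t • g) ^ 3 * (fb + t • gb) ^ 3) := by
      rw [show P6 m M (γ t)
          = Phi M (fpa (γ t) 1 ^ 3 * fpa (γ t) (-1) ^ 3) from rfl]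
      rw [show fpa (γ t) 1 = f + t • g from fpa_line p v t 1,
        show fpa (γ t) (-1) = fb + t • gb from fpa_line p v t (-1)]
    rw [h1]
    have hring : (f + t • g) ^ 3 * (fb + t • gb) ^ 3
        = (f^3*fb^3)
        + (algebraMap ℝ (AddMonoidAlgebra ℝ (ℤ × ℤ)) t)^1 * (3*(f^2*g*fb^3) + 3*(f^3*fb^2*gb))
        + (algebraMap ℝ (AddMonoidAlgebra ℝ (ℤ × ℤ)) t)^2 * (3*(f^3*fb*gb^2) + 9*(f^2*g*fb^2*gb) + 3*(f*g^2*fb^3))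
        + (algebraMap ℝ (AddMonoidAlgebra ℝ (ℤ × ℤ)) t)^3 * (f^3*gb^3 + 9*(f^2*g*fb*gb^2) + 9*(f*g^2*fb^2*gb) + g^3*fb^3)
        + (algebraMap ℝ (AddMonoidAlgebra ℝ (ℤ × ℤ)) t)^4 * (3*(f^2*g*gb^3) + 9*(f*g^2*fb*gb^2) + 3*(g^3*fb^2*gb))
        + (algebraMap ℝ (AddMonoidAlgebra ℝ (ℤ × ℤ)) t)^5 * (3*(f*g^2*gb^3) + 3*(g^3*fb*gb^2))
        + (algebraMap ℝ (AddMonoidAlgebra ℝ (ℤ × ℤ)) t)^6 * (g^3*gb^3) := by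
      rw [Algebra.smul_def t g, Algebra.smul_def t gb]
      ring
    rw [hring, Phi_add, Phi_add, Phi_add, Phi_add, Phi_add, Phi_add,
      halg, halg, halg, halg, halg, halg]
    ring
  set a0 := Phi M (f^3*fb^3) with ha0
  set a1 := Phi M (3*(f^2*g*fb^3) + 3*(f^3*fb^2*gb)) with ha1
  set a2 := Phi M (3*(f^3*fb*gb^2) + 9*(f^2*g*fb^2*gb) + 3*(f*g^2*fb^3)) with ha2
  set a3 := Phi M (f^3*gb^3 + 9*(f^2*g*fb*gb^2) + 9*(f*g^2*fb^2*gb) + g^3*fb^3) with ha3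
  set a4 := Phi M (3*(f^2*g*gb^3) + 9*(f*g^2*fb*gb^2) + 3*(g^3*fb^2*gb)) with ha4
  set a5 := Phi M (3*(f*g^2*gb^3) + 3*(g^3*fb*gb^2)) with ha5
  set a6 := Phi M (g^3*gb^3) with ha6
  set Q : Polynomial ℝ := Polynomial.C a0 + Polynomial.C a1 * Polynomial.X
    + Polynomial.C a2 * Polynomial.X^2 + Polynomial.C a3 * Polynomial.X^3
    + Polynomial.C a4 * Polynomial.X^4 + Polynomial.C a5 * Polynomial.X^5
    + Polynomial.C a6 * Polynomial.X^6 with hQdef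
  have hQeval : (fun t : ℝ => Polynomial.eval t Q) = fun t => P6 m M (γ t) := by
    funext t
    rw [hexp t, hQdef]
    simp only [Polynomial.eval_add, Polynomial.eval_mul, Polynomial.eval_pow,
      Polynomial.eval_C, Polynomial.eval_X]
    ring
  have hQ := Q.hasDerivAt (0 : ℝ)
  rw [hQeval] at hQ
  have hb1 : Polynomial.eval 0 (Polynomial.derivative Q) = a1 := by
    rw [hQdef]
    simp
  rw [hb1] at hQ
  have hD0 : a1 = 0 := hloc.hasDerivAt_eq_zero hQ
  have hsig : Phi M (f^2*g*fb^3) = Phi M (f^3*fb^2*gb) := by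
    have h1 : sigmaNeg (f^2*g*fb^3) = fb^2*gb*f^3 := by
      rw [map_mul, map_mul, map_pow, map_pow]
      rw [hf, hfb, hg, hgb, sigmaNeg_fpa, sigmaNeg_fpa, sigmaNeg_fpa]
      norm_num
    calc Phi M (f^2*g*fb^3) = Phi M (sigmaNeg (f^2*g*fb^3)) := (Phi_sigmaNeg M _).symm
    _ = Phi M (fb^2*gb*f^3) := by rw [h1]
    _ = Phi M (f^3*fb^2*gb) := by ring_nf
  have h6 : Phi M (f^3*fb^2*gb) = 0 := by
    have hsplit : a1 = 3 * Phi M (f^2*g*fb^3) + 3 * Phi M (f^3*fb^2*gb) := by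
      rw [ha1, Phi_add, h3smul, h3smul]
    rw [hsplit, hsig] at hD0
    linarith
  have hA : ∀ x : ℤ × ℤ, Phi M (f^3*fb^2 * AddMonoidAlgebra.single x 1)
      = ∑ᶠ (b : ℤ) (_ : (M : ℤ) ∣ b), (f^3*fb^2).coeff ((0, b) - x) := by
    intro x
    refine finsum_congr fun b => finsum_congr fun _ => ?_
    rw [AddMonoidAlgebra.coeff_mul_single_apply, mul_one, sub_eq_add_neg]
  have hL : (∑ᶠ (b : ℤ) (_ : (M : ℤ) ∣ b), (f^3*fb^2).coeff ((i : ℤ), b + (j : ℤ)))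
      = Phi M (f^3*fb^2 * AddMonoidAlgebra.single (-(i : ℤ), -(j : ℤ)) 1) := by
    rw [hA]
    refine finsum_congr fun b => finsum_congr fun _ => ?_
    congr 1
    rw [Prod.mk_sub_mk]
    norm_num
  have hR : (∑ᶠ (b : ℤ) (_ : (M : ℤ) ∣ b), (f^3*fb^2).coeff ((i : ℤ), b))
      = Phi M (f^3*fb^2 * AddMonoidAlgebra.single (-(i : ℤ), 0) 1) := by
    rw [hA]
    refine finsum_congr fun b => finsum_congr fun _ => ?_
    congr 1
    rw [Prod.mk_sub_mk]
    norm_num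
  have hfin : Phi M (f^3*fb^2*gb)
      = Phi M (f^3*fb^2 * AddMonoidAlgebra.single (-(i : ℤ), -(j : ℤ)) 1)
        - Phi M (f^3*fb^2 * AddMonoidAlgebra.single (-(i : ℤ), 0) 1) := by
    rw [hgm, mul_sub, Phi_sub]
  beta_reduce
  rw [hL, hR]
  rw [hfin] at h6
  linarith
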